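/- For every integer k with 1 ≤ k ≤ 6, the complex function y ↦ δ(e^{−y}) − y + y^{k+1}/(k+1) is big-O of y^{k+2} as y → 0 in ℂ; equivalently, δ(e^{−y}) = y − (1/(k+1))·y^{k+1} + O(y^{k+2}) near y = 0. -/

import Mathlib

open Real Filter Asymptotics

/-- Generating polynomial of the k-step BDF method: δ(ξ) = ∑_{j=1}^{k} (1/j)(1−ξ)^j. -/
noncomputable def bdfDelta (k : ℕ) (ξ : ℂ) : ℂ :=
  ∑ j ∈ Finset.Icc 1 k, (1 / (j : ℂ)) * (1 - ξ) ^ j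

lemma logTaylor_neg_eq (k : ℕ) (u : ℂ) :
    Complex.logTaylor (k + 2) (-u)
      = -(∑ j ∈ Finset.Icc 1 k, (1 / (j : ℂ)) * u ^ j) - u ^ (k + 1) / ((k : ℂ) + 1) := by
  have hterm : ∀ j : ℕ, ((-1 : ℂ)) ^ (j + 1) * (-u) ^ j / (j : ℂ) = -(u ^ j / (j : ℂ)) := by
    intro j
    have h : ((-1 : ℂ)) ^ (j + 1) * (-u) ^ j = -(u ^ j) := by
      rw [pow_succ, mul_comm ((-1 : ℂ) ^ j) (-1), mul_assoc, ← mul_pow]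
      simp
    rw [h, neg_div]
  have hins : Finset.range (k + 2) = insert 0 (Finset.Icc 1 (k + 1)) := by
    ext j
    simp only [Finset.mem_range, Finset.mem_insert, Finset.mem_Icc]
    omega
  have hs : ∑ j ∈ Finset.Icc 1 k, (1 / (j : ℂ)) * u ^ j
      = ∑ j ∈ Finset.Icc 1 k, u ^ j / (j : ℂ) :=
    Finset.sum_congr rfl fun j _ => by rw [one_div, inv_mul_eq_div]
  rw [Complex.logTaylor, hs]
  calc ∑ j ∈ Finset.range (k + 2), (-1 : ℂ) ^ (j + 1) * (-u) ^ j / (j : ℂ)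
      = ∑ j ∈ Finset.range (k + 2), -(u ^ j / (j : ℂ)) := by
        exact Finset.sum_congr rfl fun j _ => hterm j
    _ = -(∑ j ∈ Finset.Icc 1 (k + 1), u ^ j / (j : ℂ)) := by
        rw [hins, Finset.sum_insert (by simp)]
        simp
    _ = -(∑ j ∈ Finset.Icc 1 k, u ^ j / (j : ℂ)) - u ^ (k + 1) / ((k : ℂ) + 1) := by
        rw [Finset.sum_Icc_succ_top (by omega : 1 ≤ k + 1)]
        push_cast
        ring

/-- For every 1 ≤ k ≤ 6, δ(e^{−y}) = y − y^{k+1}/(k+1) + O(y^{k+2}) as y → 0 in ℂ. -/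
theorem bdfDelta_expansion (k : ℕ) (hk1 : 1 ≤ k) (hk6 : k ≤ 6) :
    (fun y : ℂ => bdfDelta k (Complex.exp (-y)) - y + y ^ (k + 1) / ((k : ℂ) + 1))
      =O[nhds (0 : ℂ)] fun y : ℂ => y ^ (k + 2) := by
  set u : ℂ → ℂ := fun y => 1 - Complex.exp (-y) with hu_def
  -- eventually ‖y‖ ≤ 1
  have hball : ∀ᶠ y : ℂ in nhds 0, ‖y‖ ≤ 1 := by
    filter_upwards [Metric.ball_mem_nhds (0 : ℂ) one_pos] with y hy
    rw [Metric.mem_ball, dist_eq_norm, sub_zero] at hy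
    exact hy.le
  -- u y - y = O(y^2)
  have hu2 : (fun y : ℂ => u y - y) =O[nhds 0] fun y : ℂ => y ^ 2 := by
    rw [isBigO_iff]
    refine ⟨1, ?_⟩
    filter_upwards [hball] with y hy
    have h := Complex.norm_exp_sub_one_sub_id_le (x := -y) (by simpa using hy)
    have : ‖u y - y‖ = ‖Complex.exp (-y) - 1 - -y‖ := by
      rw [hu_def]
      simp only
      rw [show (1 : ℂ) - Complex.exp (-y) - y = -(Complex.exp (-y) - 1 - -y) by ring, norm_neg]
    rw [this, one_mul]
    simpa using h
  -- y^2 = O(y) near 0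
  have hy2y : (fun y : ℂ => y ^ 2) =O[nhds 0] fun y : ℂ => y := by
    rw [isBigO_iff]
    refine ⟨1, ?_⟩
    filter_upwards [hball] with y hy
    rw [norm_pow, sq, one_mul]
    exact mul_le_of_le_one_left (norm_nonneg y) hy
  -- u y = O(y)
  have hu : (fun y : ℂ => u y) =O[nhds 0] fun y : ℂ => y := by
    have h1 := (hu2.trans hy2y).add (isBigO_refl (fun y : ℂ => y) (nhds 0))
    refine h1.congr_left fun y => by ring
  -- eventually ‖u y‖ ≤ 1/2
  have hcont : Continuous u := by
    rw [hu_def]; continuity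
  have hsmall : ∀ᶠ y : ℂ in nhds 0, ‖u y‖ ≤ 1 / 2 := by
    have h0 : u 0 = 0 := by simp [hu_def]
    have ht : Tendsto u (nhds 0) (nhds 0) := by
      simpa [h0] using hcont.tendsto 0
    filter_upwards [ht (Metric.closedBall_mem_nhds 0 (by norm_num : (0 : ℝ) < 1 / 2))] with y hy
    simpa [dist_eq_norm] using hy
  -- log tail bound: A = O(u^(k+2)) = O(y^(k+2))
  have hA : (fun y : ℂ => Complex.log (1 + -(u y)) - Complex.logTaylor (k + 2) (-(u y)))
      =O[nhds 0] fun y : ℂ => y ^ (k + 2) := by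
    refine IsBigO.trans ?_ (hu.pow (k + 2))
    rw [isBigO_iff]
    refine ⟨2, ?_⟩
    filter_upwards [hsmall] with y hy
    have hlt : ‖-(u y)‖ < 1 := by rw [norm_neg]; linarith
    have hb := Complex.norm_log_sub_logTaylor_le (k + 1) hlt
    rw [norm_neg] at hb
    have h2 : ‖u y‖ ^ (k + 2) * (1 - ‖u y‖)⁻¹ / (↑(k + 1) + 1) ≤ 2 * ‖u y‖ ^ (k + 2) := by
      have hnn : (0 : ℝ) ≤ ‖u y‖ ^ (k + 2) := by positivity
      have hinv : (1 - ‖u y‖)⁻¹ ≤ 2 := by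
        rw [inv_le_comm₀ (by linarith) (by norm_num)]
        linarith
      have hnum : ‖u y‖ ^ (k + 2) * (1 - ‖u y‖)⁻¹ ≤ ‖u y‖ ^ (k + 2) * 2 :=
        mul_le_mul_of_nonneg_left hinv hnn
      have hden : (1 : ℝ) ≤ (↑(k + 1) + 1 : ℝ) := by
        push_cast
        linarith [Nat.cast_nonneg (α := ℝ) k]
      calc ‖u y‖ ^ (k + 2) * (1 - ‖u y‖)⁻¹ / (↑(k + 1) + 1)
          ≤ ‖u y‖ ^ (k + 2) * 2 / 1 :=
            div_le_div₀ (by positivity) hnum one_pos hden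
        _ = 2 * ‖u y‖ ^ (k + 2) := by ring
    calc ‖Complex.log (1 + -(u y)) - Complex.logTaylor (k + 2) (-(u y))‖
        ≤ ‖u y‖ ^ (k + 1 + 1) * (1 - ‖u y‖)⁻¹ / (↑(k + 1) + 1) := hb
      _ ≤ 2 * ‖u y‖ ^ (k + 2) := h2
      _ = 2 * ‖u y ^ (k + 2)‖ := by rw [norm_pow]
  -- y^(k+1) - u^(k+1) = O(y^(k+2))
  have hsum : (fun y : ℂ => ∑ i ∈ Finset.range (k + 1), y ^ i * u y ^ (k - i))
      =O[nhds 0] fun y : ℂ => y ^ k := by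
    apply IsBigO.fun_sum
    intro i hi
    have hik : i ≤ k := by
      rw [Finset.mem_range] at hi; omega
    have h1 : (fun y : ℂ => y ^ i * u y ^ (k - i)) =O[nhds 0]
        fun y : ℂ => y ^ i * y ^ (k - i) :=
      (isBigO_refl (fun y : ℂ => y ^ i) (nhds 0)).mul (hu.pow (k - i))
    have h2 : (fun y : ℂ => y ^ i * y ^ (k - i)) = fun y : ℂ => y ^ k := by
      funext y
      rw [← pow_add, Nat.add_sub_cancel' hik]
    rwa [h2] at h1
  have hyu : (fun y : ℂ => y - u y) =O[nhds 0] fun y : ℂ => y ^ 2 := by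
    have := hu2.neg_left
    refine this.congr_left fun y => by ring
  have hB : (fun y : ℂ => y ^ (k + 1) - u y ^ (k + 1)) =O[nhds 0] fun y : ℂ => y ^ (k + 2) := by
    have h1 := hsum.mul hyu
    have h2 : (fun y : ℂ => (∑ i ∈ Finset.range (k + 1), y ^ i * u y ^ (k - i)) * (y - u y))
        = fun y : ℂ => y ^ (k + 1) - u y ^ (k + 1) := by
      funext y
      have := geom_sum₂_mul y (u y) (k + 1)
      simpa using this
    have h3 : (fun y : ℂ => y ^ k * y ^ 2) = fun y : ℂ => y ^ (k + 2) := by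
      funext y; rw [← pow_add]
    rwa [h2, h3] at h1
  -- main identity, eventually
  have hident : (fun y : ℂ =>
      bdfDelta k (Complex.exp (-y)) - y + y ^ (k + 1) / ((k : ℂ) + 1))
      =ᶠ[nhds 0] (fun y : ℂ =>
        (Complex.log (1 + -(u y)) - Complex.logTaylor (k + 2) (-(u y)))
        + (y ^ (k + 1) - u y ^ (k + 1)) / ((k : ℂ) + 1)) := by
    filter_upwards [hball] with y hy
    have hlog : Complex.log (1 + -(u y)) = -y := by
      have h1 : (1 : ℂ) + -(u y) = Complex.exp (-y) := by
        rw [hu_def]; ring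
      rw [h1]
      apply Complex.log_exp
      · have habs : |(-y).im| ≤ ‖y‖ := by
          simpa using Complex.abs_im_le_norm (-y)
        have hpi : (1 : ℝ) < π := by linarith [Real.pi_gt_three]
        have := abs_le.mp habs
        linarith
      · have habs : |(-y).im| ≤ ‖y‖ := by
          simpa using Complex.abs_im_le_norm (-y)
        have hpi : (1 : ℝ) < π := by linarith [Real.pi_gt_three]
        have := abs_le.mp habs
        linarith
    have hdelta : bdfDelta k (Complex.exp (-y)) = ∑ j ∈ Finset.Icc 1 k, (1 / (j : ℂ)) * u y ^ j :=
      rfl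
    rw [hlog, logTaylor_neg_eq k (u y), hdelta]
    ring
  -- conclude
  refine hident.trans_isBigO ?_
  refine hA.add ?_
  have h1 : (fun y : ℂ => ((k : ℂ) + 1)⁻¹ * (y ^ (k + 1) - u y ^ (k + 1)))
      =O[nhds 0] fun y : ℂ => y ^ (k + 2) := hB.const_mul_left _
  refine h1.congr_left fun y => by rw [inv_mul_eq_div]
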